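/- The single-group smoothed ℓ0 function f(x) = 1 − exp(−‖x‖₂²/(2σ²)) on ℝⁿ is convex on the set {x : ‖x‖₂² ≤ σ²}. -/

import Mathlib

open Finset

/-- Derivative of the 1-D quadratic exponential. -/
private lemma hasDerivAt_aux (A B C σ : ℝ) (t : ℝ) :
    HasDerivAt (fun t : ℝ => 1 - Real.exp (-(A + 2*B*t + C*t^2) / (2*σ^2)))
      ((2*B + 2*C*t) / (2*σ^2) * Real.exp (-(A + 2*B*t + C*t^2) / (2*σ^2))) t := by
  have hp : HasDerivAt (fun t : ℝ => A + 2*B*t + C*t^2) (2*B + 2*C*t) t := by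
    have h1 : HasDerivAt (fun t : ℝ => A + 2*B*t) (2*B) t := by
      simpa using ((hasDerivAt_id t).const_mul (2*B)).const_add A
    have h2 : HasDerivAt (fun t : ℝ => C*t^2) (C*(2*t)) t := by
      simpa using (hasDerivAt_pow 2 t).const_mul C
    have := h1.add h2
    refine this.congr_deriv ?_
    ring
  have hu : HasDerivAt (fun t : ℝ => -(A + 2*B*t + C*t^2) / (2*σ^2))
      (-(2*B + 2*C*t) / (2*σ^2)) t := (hp.neg).div_const _
  have := (hu.exp).const_sub 1
  refine this.congr_deriv ?_
  ring

private lemma convex_aux (n : ℕ) (σ : ℝ) :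
    Convex ℝ {x : Fin n → ℝ | ∑ i, x i ^ 2 ≤ σ ^ 2} := by
  intro x hx y hy a b ha hb hab
  simp only [Set.mem_setOf_eq] at *
  have h1 : ∀ i, ((a • x + b • y) i) ^ 2 ≤ a * x i ^ 2 + b * y i ^ 2 := by
    intro i
    simp only [Pi.add_apply, Pi.smul_apply, smul_eq_mul]
    nlinarith [sq_nonneg (x i - y i), mul_nonneg ha hb]
  calc ∑ i, ((a • x + b • y) i) ^ 2 ≤ ∑ i, (a * x i ^ 2 + b * y i ^ 2) :=
        Finset.sum_le_sum fun i _ => h1 i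
    _ = a * ∑ i, x i ^ 2 + b * ∑ i, y i ^ 2 := by
        rw [Finset.sum_add_distrib, Finset.mul_sum, Finset.mul_sum]
    _ ≤ a * σ ^ 2 + b * σ ^ 2 := by
        gcongr
    _ = σ ^ 2 := by nlinarith

theorem single_group_sl0_convexOn_ball (n : ℕ) (σ : ℝ) (hσ : 0 < σ) :
    ConvexOn ℝ {x : Fin n → ℝ | ∑ i, x i ^ 2 ≤ σ ^ 2}
      (fun x : Fin n → ℝ => 1 - Real.exp (-(∑ i, x i ^ 2) / (2 * σ ^ 2))) := by
  refine ⟨convex_aux n σ, ?_⟩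
  intro x hx y hy a b ha hb hab
  simp only [Set.mem_setOf_eq] at hx hy
  set A : ℝ := ∑ i, x i ^ 2 with hA
  set B : ℝ := ∑ i, x i * (y i - x i) with hB
  set C : ℝ := ∑ i, (y i - x i) ^ 2 with hC
  have key : ∀ t : ℝ, ∑ i, (x i + t * (y i - x i)) ^ 2 = A + 2*B*t + C*t^2 := by
    intro t
    rw [hA, hB, hC]
    rw [show (∑ i, (x i + t * (y i - x i)) ^ 2)
        = ∑ i, (x i ^ 2 + (x i * (y i - x i)) * (2*t) + (y i - x i) ^ 2 * t^2) from
      Finset.sum_congr rfl fun i _ => by ring]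
    rw [Finset.sum_add_distrib, Finset.sum_add_distrib, ← Finset.sum_mul, ← Finset.sum_mul]
    ring
  -- membership of segment points in the ball
  have hmem : ∀ t ∈ Set.Icc (0:ℝ) 1, A + 2*B*t + C*t^2 ≤ σ^2 := by
    intro t ht
    rw [← key t]
    have := convex_aux n σ hx hy (by linarith [ht.2] : (0:ℝ) ≤ 1 - t) ht.1 (by ring)
    simp only [Set.mem_setOf_eq] at this
    convert this using 2 with i
    simp only [Pi.add_apply, Pi.smul_apply, smul_eq_mul]
    ring
  -- Cauchy–Schwarz bound
  have hCS : ∀ t ∈ Set.Icc (0:ℝ) 1, (B + C*t)^2 ≤ σ^2 * C := by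
    intro t ht
    have h1 : (∑ i, (x i + t * (y i - x i)) * (y i - x i))^2
        ≤ (∑ i, (x i + t * (y i - x i)) ^ 2) * ∑ i, (y i - x i) ^ 2 :=
      Finset.sum_mul_sq_le_sq_mul_sq _ _ _
    have h2 : ∑ i, (x i + t * (y i - x i)) * (y i - x i) = B + C*t := by
      rw [hB, hC, show (∑ i, (x i + t * (y i - x i)) * (y i - x i))
          = ∑ i, (x i * (y i - x i) + (y i - x i)^2 * t) from
        Finset.sum_congr rfl fun i _ => by ring]
      rw [Finset.sum_add_distrib, ← Finset.sum_mul]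
    have hC0 : 0 ≤ C := Finset.sum_nonneg fun i _ => sq_nonneg _
    calc (B + C*t)^2 = (∑ i, (x i + t * (y i - x i)) * (y i - x i))^2 := by rw [h2]
      _ ≤ (∑ i, (x i + t * (y i - x i)) ^ 2) * C := by rw [hC]; exact h1
      _ ≤ σ^2 * C := by
          have := hmem t ht
          rw [key t] at *
          nlinarith
  -- the 1-D function
  set ψ : ℝ → ℝ := fun t => 1 - Real.exp (-(A + 2*B*t + C*t^2) / (2*σ^2)) with hψdef
  have hσ2 : (0:ℝ) < 2*σ^2 := by positivity
  have hd1 : ∀ t : ℝ, HasDerivAt ψ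
      ((2*B + 2*C*t) / (2*σ^2) * Real.exp (-(A + 2*B*t + C*t^2) / (2*σ^2))) t :=
    fun t => hasDerivAt_aux A B C σ t
  have hderiv : deriv ψ = fun t =>
      (2*B + 2*C*t) / (2*σ^2) * Real.exp (-(A + 2*B*t + C*t^2) / (2*σ^2)) :=
    funext fun t => (hd1 t).deriv
  have hd2 : ∀ t : ℝ, HasDerivAt (deriv ψ)
      ((2*C) / (2*σ^2) * Real.exp (-(A + 2*B*t + C*t^2) / (2*σ^2))
        + (2*B + 2*C*t) / (2*σ^2) *
          (Real.exp (-(A + 2*B*t + C*t^2) / (2*σ^2)) * (-(2*B + 2*C*t) / (2*σ^2)))) t := by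
    intro t
    rw [hderiv]
    have hg : HasDerivAt (fun t : ℝ => (2*B + 2*C*t) / (2*σ^2)) ((2*C) / (2*σ^2)) t := by
      have : HasDerivAt (fun t : ℝ => 2*B + 2*C*t) (2*C) t := by
        simpa using ((hasDerivAt_id t).const_mul (2*C)).const_add (2*B)
      exact this.div_const _
    have hp : HasDerivAt (fun t : ℝ => A + 2*B*t + C*t^2) (2*B + 2*C*t) t := by
      have h1 : HasDerivAt (fun t : ℝ => A + 2*B*t) (2*B) t := by
        simpa using ((hasDerivAt_id t).const_mul (2*B)).const_add A
      have h2 : HasDerivAt (fun t : ℝ => C*t^2) (C*(2*t)) t := by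
        simpa using (hasDerivAt_pow 2 t).const_mul C
      have := h1.add h2
      refine this.congr_deriv ?_
      ring
    have he : HasDerivAt (fun t : ℝ => Real.exp (-(A + 2*B*t + C*t^2) / (2*σ^2)))
        (Real.exp (-(A + 2*B*t + C*t^2) / (2*σ^2)) * (-(2*B + 2*C*t) / (2*σ^2))) t :=
      ((hp.neg).div_const _).exp
    exact hg.mul he
  have hconvψ : ConvexOn ℝ (Set.Icc (0:ℝ) 1) ψ := by
    apply convexOn_of_deriv2_nonneg (convex_Icc 0 1)
    · exact fun t _ => (hd1 t).continuousAt.continuousWithinAt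
    · exact fun t _ => (hd1 t).differentiableAt.differentiableWithinAt
    · exact fun t _ => (hd2 t).differentiableAt.differentiableWithinAt
    · intro t ht
      rw [interior_Icc] at ht
      have ht' : t ∈ Set.Icc (0:ℝ) 1 := ⟨le_of_lt ht.1, le_of_lt ht.2⟩
      have hiter : deriv^[2] ψ t = deriv (deriv ψ) t := by
        simp [Function.iterate_succ, Function.comp]
      rw [hiter, (hd2 t).deriv]
      have hcs := hCS t ht'
      have hexp : 0 < Real.exp (-(A + 2*B*t + C*t^2) / (2*σ^2)) := Real.exp_pos _
      rw [show (2*C) / (2*σ^2) * Real.exp (-(A + 2*B*t + C*t^2) / (2*σ^2))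
          + (2*B + 2*C*t) / (2*σ^2) *
            (Real.exp (-(A + 2*B*t + C*t^2) / (2*σ^2)) * (-(2*B + 2*C*t) / (2*σ^2)))
          = Real.exp (-(A + 2*B*t + C*t^2) / (2*σ^2)) *
            ((2*C) / (2*σ^2) - ((2*B + 2*C*t) / (2*σ^2))^2) from by ring]
      apply mul_nonneg (le_of_lt hexp)
      rw [sub_nonneg, div_pow]
      rw [div_le_div_iff₀ (by positivity) hσ2]
      nlinarith [sq_nonneg σ]
  -- apply convexity of ψ at points 0 and 1
  have h01 : (0:ℝ) ∈ Set.Icc (0:ℝ) 1 := by norm_num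
  have h11 : (1:ℝ) ∈ Set.Icc (0:ℝ) 1 := by norm_num
  have := hconvψ.2 h01 h11 ha hb hab
  simp only [smul_eq_mul, mul_zero, mul_one, zero_add] at this
  have hψ0 : ψ 0 = 1 - Real.exp (-(∑ i, x i ^ 2) / (2 * σ ^ 2)) := by
    simp [hψdef, hA]
  have hψ1 : ψ 1 = 1 - Real.exp (-(∑ i, y i ^ 2) / (2 * σ ^ 2)) := by
    have : A + 2*B*1 + C*1^2 = ∑ i, y i ^ 2 := by
      have := key 1
      simp only [one_mul] at this
      rw [← this]
      exact Finset.sum_congr rfl fun i _ => by ring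
    simp only [hψdef, this]
  have hψb : ψ b = 1 - Real.exp (-(∑ i, (a • x + b • y) i ^ 2) / (2 * σ ^ 2)) := by
    have hs : ∑ i, (a • x + b • y) i ^ 2 = A + 2*B*b + C*b^2 := by
      rw [← key b]
      refine Finset.sum_congr rfl fun i _ => ?_
      simp only [Pi.add_apply, Pi.smul_apply, smul_eq_mul]
      have : a = 1 - b := by linarith
      rw [this]; ring
    simp only [hψdef, hs]
  rw [hψ0, hψ1, hψb] at this
  exact this
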